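/- If M₁, M₂ are sequence-based invariant subspaces of H²(D^n) and h is a unimodular function on T^n with M₂ = h·M₁, then h is independent of the variable z_n (h is both z_n-analytic and conjugate z_n-analytic, hence constant in z_n). -/

import Mathlib

/-!
Common setup: we model the Hardy space `H²(𝔻ⁿ)` via boundary values on the
`n`-torus `Tⁿ = (ℝ/ℤ)ⁿ`: `H²` is the subspace of `L²(Tⁿ)` of functions whose
Fourier coefficients with some negative index vanish.  `H^∞` functions are
(a.e. classes of) essentially bounded measurable functions with analytic
(nonnegative) Fourier spectrum, identified with their boundary functions `f*`.
Multiplication operators are expressed via a.e. pointwise products.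
-/

open MeasureTheory Complex
open scoped ComplexConjugate

noncomputable section

/-- The `n`-torus. -/
abbrev Torus (n : ℕ) := Fin n → AddCircle (1 : ℝ)

/-- `L²(Tⁿ)`. -/
abbrev Lp2 (n : ℕ) := Lp ℂ 2 (volume : Measure (Torus n))

/-- The monomial `z^α` (as a function on the torus). -/
def charFunT {n : ℕ} (α : Fin n → ℤ) : Torus n → ℂ := fun x => ∏ i, fourier (α i) (x i)

lemma charFun_continuous {n : ℕ} (α : Fin n → ℤ) : Continuous (charFunT α) :=
  continuous_finsetProd _ fun i _ => (fourier (α i)).continuous.comp (continuous_apply i)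

lemma charFun_norm {n : ℕ} (α : Fin n → ℤ) (x : Torus n) : ‖charFunT α x‖ = 1 := by
  rw [charFunT, norm_prod]
  simp [Circle.norm_coe]

lemma charFun_memℒp {n : ℕ} (α : Fin n → ℤ) :
    MemLp (charFunT α) 2 (volume : Measure (Torus n)) :=
  MemLp.of_bound (charFun_continuous α).aestronglyMeasurable 1
    (Filter.Eventually.of_forall fun x => (charFun_norm α x).le)

/-- The monomial `z^α` as an element of `L²(Tⁿ)`. -/
def charLp {n : ℕ} (α : Fin n → ℤ) : Lp2 n := (charFun_memℒp α).toLp _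

/-- The `α`-th Fourier coefficient of `f ∈ L²(Tⁿ)`. -/
def coeff {n : ℕ} (f : Lp2 n) (α : Fin n → ℤ) : ℂ := inner (𝕜 := ℂ) (charLp α) f

/-- The Hardy space `H²(𝔻ⁿ)` (boundary model): elements of `L²(Tⁿ)` whose Fourier
coefficients vanish off `ℕⁿ`. -/
def H2 (n : ℕ) : Submodule ℂ (Lp2 n) where
  carrier := {f | ∀ α : Fin n → ℤ, (∃ i, α i < 0) → coeff f α = 0}
  add_mem' := fun {f} {g} hf hg α hα => by
    have h1 := hf α hα; have h2 := hg α hα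
    simp only [coeff] at h1 h2 ⊢
    rw [inner_add_right, h1, h2, add_zero]
  zero_mem' := fun α _ => by simp [coeff]
  smul_mem' := fun c {f} hf α hα => by
    have h1 := hf α hα
    simp only [coeff] at h1 ⊢
    rw [inner_smul_right, h1, mul_zero]

/-- `H²(𝔻ⁿ)` as a subset of `L²(Tⁿ)`. -/
def H2set (n : ℕ) : Set (Lp2 n) := (H2 n : Set (Lp2 n))

/-- `φ` is (the boundary function of) an `H^∞(𝔻ⁿ)` function. -/
structure IsHinf {n : ℕ} (φ : Torus n → ℂ) : Prop where
  memLinf : MemLp φ ⊤ (volume : Measure (Torus n))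
  analytic : ∀ α : Fin n → ℤ, (∃ i, α i < 0) →
    ∫ x, conj (charFunT α x) * φ x ∂(volume : Measure (Torus n)) = 0

/-- Generalized inner: `φ ∈ H^∞` with `1/φ* ∈ L^∞`, i.e. `|φ*|` essentially bounded below. -/
def IsGenInner {n : ℕ} (φ : Torus n → ℂ) : Prop :=
  IsHinf φ ∧ ∃ c : ℝ, 0 < c ∧ ∀ᵐ x ∂(volume : Measure (Torus n)), c ≤ ‖φ x‖

/-- Inner: `φ ∈ H^∞` with `|φ*| = 1` a.e. -/
def IsInner {n : ℕ} (φ : Torus n → ℂ) : Prop :=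
  IsHinf φ ∧ ∀ᵐ x ∂(volume : Measure (Torus n)), ‖φ x‖ = 1

/-- The image `φ·M` of a set `M ⊆ L²` under multiplication by a function `φ`. -/
def mulSet {n : ℕ} (φ : Torus n → ℂ) (M : Set (Lp2 n)) : Set (Lp2 n) :=
  {g | ∃ f ∈ M, (g : Torus n → ℂ) =ᵐ[(volume : Measure (Torus n))]
      fun x => φ x * (f : Torus n → ℂ) x}

/-- The coordinate function `z_i` on the torus. -/
def zCoord {n : ℕ} (i : Fin n) : Torus n → ℂ := charFunT (Pi.single i 1)

/-- Set-sum `A + B`. -/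
def sumSet {n : ℕ} (A B : Set (Lp2 n)) : Set (Lp2 n) := {h | ∃ a ∈ A, ∃ b ∈ B, h = a + b}

/-- Orthogonal difference `A ⊖ B`: elements of `A` orthogonal to `B`. -/
def osub {n : ℕ} (A B : Set (Lp2 n)) : Set (Lp2 n) :=
  {x ∈ A | ∀ y ∈ B, (inner (𝕜 := ℂ) y x : ℂ) = 0}

/-- `M` is a closed subspace of `L²(Tⁿ)` invariant under multiplication by every
coordinate `z₁, …, zₙ`. -/
structure IsInvariantSubspace {n : ℕ} (M : Set (Lp2 n)) : Prop where
  zero_mem : (0 : Lp2 n) ∈ M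
  add_mem : ∀ f g : Lp2 n, f ∈ M → g ∈ M → f + g ∈ M
  smul_mem : ∀ (c : ℂ) (f : Lp2 n), f ∈ M → c • f ∈ M
  closed : IsClosed M
  shift_mem : ∀ i : Fin n, mulSet (zCoord i) M ⊆ M

/-- Lift of a function of `z₁,…,zₙ` to the `(n+1)`-torus (ignoring the last variable). -/
def liftLast {n : ℕ} (φ : Torus n → ℂ) : Torus (n+1) → ℂ := fun x => φ (Fin.init x)

/-- Lift of a function of `z₂,…,z_{n+1}` to the `(n+1)`-torus (ignoring the first variable). -/
def liftTail {n : ℕ} (φ : Torus n → ℂ) : Torus (n+1) → ℂ := fun x => φ (Fin.tail x)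

/-- Lift of a one-variable function to the `(n+1)`-torus via the first variable. -/
def liftFst {n : ℕ} (φ : Torus 1 → ℂ) : Torus (n+1) → ℂ := fun x => φ (fun _ => x 0)

/-- `H²(𝔻ⁿ)` embedded in `L²(T^{n+1})` as the functions independent of the last variable. -/
def H2resLast (n : ℕ) : Set (Lp2 (n+1)) :=
  {F | ∀ α : Fin (n+1) → ℤ, ((∃ i, α i < 0) ∨ α (Fin.last n) ≠ 0) → coeff F α = 0}

/-- `H²(𝔻ⁿ)` (variables `z₂,…,z_{n+1}`) embedded in `L²(T^{n+1})`:
functions independent of the first variable. -/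
def H2resFst (n : ℕ) : Set (Lp2 (n+1)) :=
  {F | ∀ α : Fin (n+1) → ℤ, ((∃ i, α i < 0) ∨ α 0 ≠ 0) → coeff F α = 0}

/-- `H²(𝔻)` in the first variable only, inside `L²(T^{n+1})`. -/
def H2onlyFst (n : ℕ) : Set (Lp2 (n+1)) :=
  {F | ∀ α : Fin (n+1) → ℤ, ((∃ i, α i < 0) ∨ (∃ i, i ≠ 0 ∧ α i ≠ 0)) → coeff F α = 0}

/-- The `l`-th piece `z_n^l · f_l · H²(𝔻^{n-1})` of a sequence-based subspace
(distinguished variable: the last one). -/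
def seqPiece {n : ℕ} (f : ℕ → Torus n → ℂ) (l : ℕ) : Set (Lp2 (n+1)) :=
  mulSet (fun x => charFunT (Pi.single (Fin.last n) (l : ℤ)) x * liftLast (f l) x) (H2resLast n)

/-- The sequence-based subspace `⊕_{l≥0} f_l H²(𝔻^{n-1}) z_n^l`, as the closed span of its
(pairwise orthogonal, closed) pieces. -/
def seqM {n : ℕ} (f : ℕ → Torus n → ℂ) : Submodule ℂ (Lp2 (n+1)) :=
  (Submodule.span ℂ (⋃ l : ℕ, seqPiece f l)).topologicalClosure

/-- Conditions (I) and (II): each `f_l` is generalized inner, and each quotient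
`f_l / f_{l+1}` is a generalized inner function (expressed via `f_{l+1} · q = f_l`). -/
def SeqCond {n : ℕ} (f : ℕ → Torus n → ℂ) : Prop :=
  (∀ l, IsGenInner (f l)) ∧
  ∀ l, ∃ q : Torus n → ℂ, IsGenInner q ∧
    (fun x => f (l+1) x * q x) =ᵐ[(volume : Measure (Torus n))] f l

/-- The vector-valued Hardy space `H²(K)` with `K = H²(𝔻ⁿ)`, realized as `ℓ²` of the
Taylor coefficients. -/
abbrev lpH (n : ℕ) := lp (fun _ : ℕ => H2 n) 2

/-- `G` is the image of `F` under multiplication by the independent variable (the shift). -/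
def ShiftRel {K : Type*} [NormedAddCommGroup K] (F G : lp (fun _ : ℕ => K) 2) : Prop :=
  (G : ∀ _ : ℕ, K) 0 = 0 ∧ ∀ m, (G : ∀ _ : ℕ, K) (m + 1) = (F : ∀ _ : ℕ, K) m

/-- The `l`-th Taylor coefficient of a (boundary) function on the circle. -/
def hinfCoeff (φ : Torus 1 → ℂ) (l : ℤ) : ℂ :=
  ∫ x, conj (charFunT (fun _ : Fin 1 => l) x) * φ x ∂(volume : Measure (Torus 1))

/-- Unitary equivalence of (invariant) subspaces `M₁, M₂ ⊆ L²(Tⁿ)`: a surjective linear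
isometry `U : M₁ → M₂` intertwining multiplication by every `H^∞` function. -/
def UnitaryEquivalent {n : ℕ} (M₁ M₂ : Set (Lp2 n)) : Prop :=
  ∃ U : Lp2 n → Lp2 n,
    (∀ f ∈ M₁, U f ∈ M₂) ∧
    (∀ g ∈ M₂, ∃ f ∈ M₁, U f = g) ∧
    (∀ f g : Lp2 n, f ∈ M₁ → g ∈ M₁ → U (f + g) = U f + U g) ∧
    (∀ (c : ℂ) (f : Lp2 n), f ∈ M₁ → U (c • f) = c • U f) ∧
    (∀ f ∈ M₁, ‖U f‖ = ‖f‖) ∧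
    (∀ φ : Torus n → ℂ, IsHinf φ → ∀ f ∈ M₁, ∀ g ∈ M₁, ∀ g' : Lp2 n,
      ((g : Torus n → ℂ) =ᵐ[(volume : Measure (Torus n))]
        fun x => φ x * (f : Torus n → ℂ) x) →
      ((g' : Torus n → ℂ) =ᵐ[(volume : Measure (Torus n))]
        fun x => φ x * ((U f : Lp2 n) : Torus n → ℂ) x) →
      U g = g')


namespace S16

instance : IsProbabilityMeasure (volume : Measure (AddCircle (1:ℝ))) := by
  rw [AddCircle.volume_eq_smul_haarAddCircle]; simp; infer_instance

instance {n : ℕ} : IsProbabilityMeasure (volume : Measure (Torus n)) := by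
  rw [volume_pi]; infer_instance

lemma integral_fourier (k : ℤ) :
    ∫ t : AddCircle (1:ℝ), (fourier k t : ℂ) = if k = 0 then 1 else 0 := by
  rw [AddCircle.volume_eq_smul_haarAddCircle]
  simp only [ENNReal.ofReal_one, one_smul]
  split_ifs with hk
  · subst hk
    simp only [fourier_zero]
    simp
  · have key := fourier_add_half_inv_index (T := 1) hk one_pos
    refine integral_eq_zero_of_add_right_eq_neg (μ := AddCircle.haarAddCircle)
      (g := ((1 / 2 / (k:ℝ)) : ℝ)) fun x => ?_
    rw [key x]

lemma integral_charFun {n : ℕ} (γ : Fin n → ℤ) :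
    ∫ x : Torus n, charFunT γ x = if γ = 0 then 1 else 0 := by
  have : ∫ x : Torus n, charFunT γ x = ∏ i, ∫ t : AddCircle (1:ℝ), (fourier (γ i) t : ℂ) := by
    rw [← MeasureTheory.integral_fintype_prod_eq_prod (f := fun i (t : AddCircle (1:ℝ)) => (fourier (γ i) t : ℂ))]
    rfl
  rw [this]
  by_cases hγ : γ = 0
  · subst hγ; simp [integral_fourier]
  · obtain ⟨i, hi⟩ : ∃ i, γ i ≠ 0 := by
      by_contra hc; push_neg at hc; exact hγ (funext hc)
    rw [if_neg hγ]
    exact Finset.prod_eq_zero (Finset.mem_univ i) (by rw [integral_fourier, if_neg hi])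

lemma charFun_mul {n : ℕ} (α β : Fin n → ℤ) (x : Torus n) :
    charFunT α x * charFunT β x = charFunT (α + β) x := by
  rw [charFunT, charFunT, charFunT, ← Finset.prod_mul_distrib]
  exact Finset.prod_congr rfl fun i _ => by rw [Pi.add_apply, fourier_add]

lemma charFun_conj {n : ℕ} (α : Fin n → ℤ) (x : Torus n) :
    conj (charFunT α x) = charFunT (-α) x := by
  rw [charFunT, charFunT, map_prod]
  exact Finset.prod_congr rfl fun i _ => by rw [Pi.neg_apply, fourier_neg]

lemma charFun_zero_eq {n : ℕ} (x : Torus n) : charFunT (0 : Fin n → ℤ) x = 1 := by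
  simp [charFunT, fourier_zero]

lemma coeff_eq_integral {n : ℕ} (u : Lp2 n) (α : Fin n → ℤ) :
    coeff u α = ∫ x, conj (charFunT α x) * (u : Torus n → ℂ) x := by
  rw [coeff, MeasureTheory.L2.inner_def]
  refine integral_congr_ae ?_
  filter_upwards [(charFun_memℒp α).coeFn_toLp] with x hx
  rw [RCLike.inner_apply]
  rw [show (charLp α : Torus n → ℂ) x = charFunT α x from hx]
  ring

lemma coeff_toLp {n : ℕ} {w : Torus n → ℂ} (hw : MemLp w 2 (volume : Measure (Torus n)))
    (α : Fin n → ℤ) :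
    coeff (hw.toLp w) α = ∫ x, conj (charFunT α x) * w x := by
  rw [coeff_eq_integral]
  refine integral_congr_ae ?_
  filter_upwards [hw.coeFn_toLp] with x hx
  rw [hx]

lemma coeff_charLp {n : ℕ} (α β : Fin n → ℤ) :
    coeff (charLp β) α = if α = β then 1 else 0 := by
  rw [show charLp β = (charFun_memℒp β).toLp _ from rfl, coeff_toLp]
  have : ∀ x, conj (charFunT α x) * charFunT β x = charFunT (-α + β) x := fun x => by
    rw [charFun_conj, charFun_mul]
  simp_rw [this, integral_charFun]
  by_cases h : α = β
  · simp [h]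
  · rw [if_neg (fun hc => h (neg_add_eq_zero.mp hc)), if_neg h]


/-- monomials as continuous maps -/
def charCM {n : ℕ} (α : Fin n → ℤ) : C(Torus n, ℂ) := ⟨charFunT α, charFun_continuous α⟩

lemma charCM_mul {n : ℕ} (α β : Fin n → ℤ) : charCM α * charCM β = charCM (α + β) := by
  ext x; exact charFun_mul α β x

lemma charCM_one {n : ℕ} : charCM (0 : Fin n → ℤ) = 1 := by
  ext x; exact charFun_zero_eq x

def charSpan (n : ℕ) : Submodule ℂ C(Torus n, ℂ) := Submodule.span ℂ (Set.range charCM)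

lemma charSpan_mul_mem {n : ℕ} {a b : C(Torus n, ℂ)} (ha : a ∈ charSpan n)
    (hb : b ∈ charSpan n) : a * b ∈ charSpan n := by
  have key : ∀ (β : Fin n → ℤ), ∀ a ∈ charSpan n, a * charCM β ∈ charSpan n := by
    intro β a ha
    induction ha using Submodule.span_induction with
    | mem x hx =>
      obtain ⟨γ, rfl⟩ := hx
      rw [charCM_mul]
      exact Submodule.subset_span ⟨γ + β, rfl⟩
    | zero => rw [zero_mul]; exact (charSpan n).zero_mem
    | add x y _ _ hx hy => rw [add_mul]; exact (charSpan n).add_mem hx hy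
    | smul c x _ hx => rw [smul_mul_assoc]; exact (charSpan n).smul_mem c hx
  induction hb using Submodule.span_induction with
  | mem x hx => obtain ⟨γ, rfl⟩ := hx; exact key γ a ha
  | zero => rw [mul_zero]; exact (charSpan n).zero_mem
  | add x y _ _ hx hy => rw [mul_add]; exact (charSpan n).add_mem hx hy
  | smul c x _ hx => rw [mul_smul_comm]; exact (charSpan n).smul_mem c hx

lemma charCM_star {n : ℕ} (α : Fin n → ℤ) : star (charCM α) = charCM (-α) := by
  ext x
  exact charFun_conj α x

/-- the star subalgebra of trigonometric polynomials -/
def charAlg (n : ℕ) : StarSubalgebra ℂ C(Torus n, ℂ) where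
  toSubalgebra := (charSpan n).toSubalgebra (charCM_one ▸ Submodule.subset_span ⟨0, rfl⟩)
    (fun _ _ => charSpan_mul_mem)
  star_mem' := by
    intro a ha
    induction ha using Submodule.span_induction with
    | mem x hx => obtain ⟨γ, rfl⟩ := hx; rw [charCM_star]; exact Submodule.subset_span ⟨-γ, rfl⟩
    | zero => rw [star_zero]; exact (charSpan n).zero_mem
    | add x y _ _ hx hy => rw [star_add]; exact (charSpan n).add_mem hx hy
    | smul c x _ hx => rw [star_smul]; exact (charSpan n).smul_mem _ hx

lemma charAlg_separates (n : ℕ) : (charAlg n).SeparatesPoints := by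
  intro x y hxy
  obtain ⟨i, hi⟩ : ∃ i, x i ≠ y i := by
    by_contra hc; push_neg at hc; exact hxy (funext hc)
  refine ⟨charCM (Pi.single i 1), ⟨charCM (Pi.single i 1),
    Submodule.subset_span ⟨Pi.single i 1, rfl⟩, rfl⟩, ?_⟩
  have hval : ∀ z : Torus n, charCM (Pi.single i 1) z = fourier (T := 1) 1 (z i) := by
    intro z
    show charFunT (Pi.single i 1) z = _
    rw [charFunT, Finset.prod_eq_single i (fun j _ hj => by
      rw [Pi.single_eq_of_ne hj]; exact fourier_zero) (fun hmem => absurd (Finset.mem_univ i) hmem)]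
    rw [Pi.single_eq_same]
  simp only [hval]
  intro hc
  apply hi
  have : AddCircle.toCircle ((1:ℤ) • x i) = AddCircle.toCircle ((1:ℤ) • y i) := by
    apply Subtype.coe_injective
    exact hc
  simpa using AddCircle.injective_toCircle (one_ne_zero) this

/-- the CLM from continuous functions to L² -/
def cmToLp (n : ℕ) : C(Torus n, ℂ) →L[ℂ] Lp2 n :=
  ContinuousMap.toLp (E := ℂ) 2 (volume : Measure (Torus n)) ℂ

lemma inner_cmToLp {n : ℕ} (g : C(Torus n, ℂ)) (u : Lp2 n) :
    inner (𝕜 := ℂ) (cmToLp n g) u = ∫ x, conj (g x) * (u : Torus n → ℂ) x := by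
  rw [MeasureTheory.L2.inner_def]
  refine integral_congr_ae ?_
  filter_upwards [ContinuousMap.coeFn_toLp (p := 2) (μ := (volume : Measure (Torus n))) (𝕜 := ℂ) g]
    with x hx
  rw [RCLike.inner_apply, show ((cmToLp n g : Lp2 n) : Torus n → ℂ) x = g x from hx]
  ring

/-- completeness: an L² function with all Fourier coefficients zero is zero -/
lemma eq_zero_of_coeff_zero {n : ℕ} (u : Lp2 n) (hu : ∀ α, coeff u α = 0) : u = 0 := by
  have hcont : ∀ g : C(Torus n, ℂ), inner (𝕜 := ℂ) (cmToLp n g) u = 0 := by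
    intro g
    have hclosed : IsClosed {g : C(Torus n, ℂ) | inner (𝕜 := ℂ) (cmToLp n g) u = 0} := by
      have : Continuous fun g : C(Torus n, ℂ) => inner (𝕜 := ℂ) (cmToLp n g) u :=
        Continuous.inner (cmToLp n).continuous continuous_const
      exact isClosed_eq this continuous_const
    have hsub : (charAlg n : Set C(Torus n, ℂ)) ⊆ {g | inner (𝕜 := ℂ) (cmToLp n g) u = 0} := by
      intro a ha
      induction ha using Submodule.span_induction with
      | mem x hx =>
        obtain ⟨γ, rfl⟩ := hx
        show inner (𝕜 := ℂ) (cmToLp n (charCM γ)) u = 0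
        rw [inner_cmToLp]
        rw [← hu γ, coeff_eq_integral]
        rfl
      | zero => show inner (𝕜 := ℂ) (cmToLp n 0) u = 0; rw [map_zero, inner_zero_left]
      | add x y _ _ hx hy =>
        show inner (𝕜 := ℂ) (cmToLp n (x + y)) u = 0
        rw [map_add, inner_add_left, hx, hy, add_zero]
      | smul c x _ hx =>
        show inner (𝕜 := ℂ) (cmToLp n (c • x)) u = 0
        rw [(cmToLp n).map_smul, inner_smul_left, hx, mul_zero]
    have htop := ContinuousMap.starSubalgebra_topologicalClosure_eq_top_of_separatesPoints
      (charAlg n) (charAlg_separates n)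
    have hg : g ∈ (charAlg n).topologicalClosure := htop ▸ trivial
    have : g ∈ closure (charAlg n : Set C(Torus n, ℂ)) := hg
    exact hclosed.closure_subset_iff.mpr hsub this
  -- now use density of continuous functions
  have hdense : DenseRange (cmToLp n) :=
    ContinuousMap.toLp_denseRange ℂ (volume : Measure (Torus n)) ℂ (by norm_num)
  have hall : ∀ v : Lp2 n, inner (𝕜 := ℂ) v u = 0 := by
    intro v
    have hclosed : IsClosed {v : Lp2 n | inner (𝕜 := ℂ) v u = 0} :=
      isClosed_eq (Continuous.inner continuous_id continuous_const) continuous_const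
    have : Set.range (cmToLp n) ⊆ {v : Lp2 n | inner (𝕜 := ℂ) v u = 0} := by
      rintro _ ⟨g, rfl⟩; exact hcont g
    exact hclosed.closure_subset_iff.mpr this (hdense v)
  have := hall u
  rwa [inner_self_eq_zero] at this


/-! ### Hilbert space lemmas -/

lemma closure_span_le_ker {n : ℕ} (L : Lp2 n →L[ℂ] ℂ) (s : Set (Lp2 n))
    (hv : ∀ v ∈ s, L v = 0) :
    (Submodule.span ℂ s).topologicalClosure ≤ LinearMap.ker (L : Lp2 n →ₗ[ℂ] ℂ) := by
  refine Submodule.topologicalClosure_minimal _ (Submodule.span_le.mpr ?_) ?_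
  · intro v hvs; exact hv v hvs
  · exact isClosed_eq L.continuous continuous_const

lemma mem_closureSpan {n : ℕ} (S : Set (Fin n → ℤ)) (u : Lp2 n)
    (hu : ∀ α ∉ S, coeff u α = 0) :
    u ∈ (Submodule.span ℂ (charLp '' S)).topologicalClosure := by
  set V := (Submodule.span ℂ (charLp '' S)).topologicalClosure with hV
  haveI : CompleteSpace V :=
    (Submodule.isClosed_topologicalClosure _).completeSpace_coe
  set w := u - (V.orthogonalProjectionOnto u : Lp2 n) with hw
  have hwV : w ∈ Vᗮ := Submodule.sub_starProjection_mem_orthogonal (K := V) u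
  have hcoeffw : ∀ α, coeff w α = 0 := by
    intro α
    by_cases hα : α ∈ S
    · have hmem : charLp α ∈ V :=
        Submodule.le_topologicalClosure _ (Submodule.subset_span ⟨α, hα, rfl⟩)
      exact (Submodule.mem_orthogonal _ _).mp hwV (charLp α) hmem
    · have h1 : coeff u α = 0 := hu α hα
      have h2 : inner (𝕜 := ℂ) (charLp α) (V.orthogonalProjectionOnto u : Lp2 n) = 0 := by
        have hker : V ≤ LinearMap.ker ((innerSL ℂ (charLp α)) : Lp2 n →ₗ[ℂ] ℂ) := by
          refine closure_span_le_ker _ _ ?_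
          rintro _ ⟨β, hβ, rfl⟩
          have : coeff (charLp β) α = 0 := by
            rw [coeff_charLp, if_neg (fun hc => hα (by rw [hc]; exact hβ))]
          exact this
        exact hker (V.orthogonalProjectionOnto u).2
      rw [coeff, hw, inner_sub_right, h2, sub_zero]
      exact h1
  have : w = 0 := eq_zero_of_coeff_zero w hcoeffw
  have hu2 : u = (V.orthogonalProjectionOnto u : Lp2 n) := by
    have h0 := this
    rw [hw, sub_eq_zero] at h0
    exact h0
  rw [hu2]
  exact (V.orthogonalProjectionOnto u).2

/-! ### the last-coordinate splitting -/

def TEquiv (n : ℕ) : Torus (n+1) ≃ᵐ (AddCircle (1:ℝ) × Torus n) :=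
  MeasurableEquiv.piFinSuccAbove (fun _ => AddCircle (1:ℝ)) (Fin.last n)

lemma mpTE (n : ℕ) : MeasurePreserving (TEquiv n)
    (volume : Measure (Torus (n+1))) (volume : Measure (AddCircle (1:ℝ) × Torus n)) :=
  volume_preserving_piFinSuccAbove (fun _ => AddCircle (1:ℝ)) (Fin.last n)

lemma mpTEsymm (n : ℕ) : MeasurePreserving (TEquiv n).symm
    (volume : Measure (AddCircle (1:ℝ) × Torus n)) (volume : Measure (Torus (n+1))) :=
  (mpTE n).symm (TEquiv n)

lemma TEquiv_symm_apply {n : ℕ} (p : AddCircle (1:ℝ) × Torus n) :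
    (TEquiv n).symm p = Fin.snoc p.2 p.1 := by
  rw [TEquiv, MeasurableEquiv.piFinSuccAbove_symm_apply]
  exact Fin.insertNth_last' p.1 p.2

lemma integral_torus_succ {n : ℕ} (F : Torus (n+1) → ℂ) :
    ∫ x, F x = ∫ p : AddCircle (1:ℝ) × Torus n, F (Fin.snoc p.2 p.1) := by
  rw [← (mpTEsymm n).integral_comp (TEquiv n).symm.measurableEmbedding F]
  refine integral_congr_ae (Filter.Eventually.of_forall fun p => ?_)
  simp only [TEquiv_symm_apply]

lemma charFun_snoc {n : ℕ} (γ : Fin (n+1) → ℤ) (y : Torus n) (t : AddCircle (1:ℝ)) :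
    charFunT γ (Fin.snoc y t) = fourier (γ (Fin.last n)) t * charFunT (Fin.init γ) y := by
  rw [charFunT, charFunT, Fin.prod_univ_castSucc]
  rw [Fin.snoc_last, mul_comm]
  congr 1
  refine Finset.prod_congr rfl fun j _ => ?_
  rw [Fin.snoc_castSucc]
  rfl

lemma liftLast_snoc {n : ℕ} (ψ : Torus n → ℂ) (y : Torus n) (t : AddCircle (1:ℝ)) :
    liftLast ψ (Fin.snoc y t) = ψ y := by
  rw [liftLast, Fin.init_snoc]

/-- Key Fubini-type computation -/
lemma integral_charFun_mul_liftLast {n : ℕ} (γ : Fin (n+1) → ℤ) (ψ : Torus n → ℂ) :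
    ∫ x, charFunT γ x * liftLast ψ x =
      (if γ (Fin.last n) = 0 then (1:ℂ) else 0) * ∫ y, charFunT (Fin.init γ) y * ψ y := by
  rw [integral_torus_succ]
  have : ∀ p : AddCircle (1:ℝ) × Torus n,
      charFunT γ (Fin.snoc p.2 p.1) * liftLast ψ (Fin.snoc p.2 p.1) =
      (fourier (γ (Fin.last n)) p.1 : ℂ) * (charFunT (Fin.init γ) p.2 * ψ p.2) := by
    intro p
    rw [charFun_snoc, liftLast_snoc]
    ring
  simp_rw [this]
  rw [show (volume : Measure (AddCircle (1:ℝ) × Torus n)) =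
    (volume : Measure (AddCircle (1:ℝ))).prod (volume : Measure (Torus n)) from rfl]
  rw [integral_prod_mul (f := fun t : AddCircle (1:ℝ) => (fourier (γ (Fin.last n)) t : ℂ))
    (g := fun y : Torus n => charFunT (Fin.init γ) y * ψ y)]
  rw [integral_fourier]

/-! ### measure-preservation of init / snoc -/

lemma measurePreserving_init {n : ℕ} :
    MeasurePreserving (fun x : Torus (n+1) => Fin.init x)
      (volume : Measure (Torus (n+1))) (volume : Measure (Torus n)) := by
  have h2 : MeasurePreserving (Prod.snd : AddCircle (1:ℝ) × Torus n → Torus n)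
      ((volume : Measure (AddCircle (1:ℝ))).prod (volume : Measure (Torus n)))
      (volume : Measure (Torus n)) := by
    constructor
    · exact measurable_snd
    · rw [Measure.map_snd_prod, measure_univ, one_smul]
  have := h2.comp (mpTE n)
  convert this using 1
  funext x
  show Fin.init x = (TEquiv n x).2
  funext j
  show x (Fin.castSucc j) = x ((Fin.last n).succAbove j)
  rw [Fin.succAbove_last]

lemma mpSnoc (n : ℕ) : MeasurePreserving
    (fun q : Torus n × AddCircle (1:ℝ) => (Fin.snoc q.1 q.2 : Torus (n+1)))
    ((volume : Measure (Torus n)).prod (volume : Measure (AddCircle (1:ℝ))))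
    (volume : Measure (Torus (n+1))) := by
  have hswap : MeasurePreserving (Prod.swap : Torus n × AddCircle (1:ℝ) → AddCircle (1:ℝ) × Torus n)
      ((volume : Measure (Torus n)).prod (volume : Measure (AddCircle (1:ℝ))))
      ((volume : Measure (AddCircle (1:ℝ))).prod (volume : Measure (Torus n))) :=
    Measure.measurePreserving_swap
  have := (mpTEsymm n).comp hswap
  convert this using 1
  funext q
  show (Fin.snoc q.1 q.2 : Torus (n+1)) = (TEquiv n).symm (q.2, q.1)
  rw [TEquiv_symm_apply]

lemma liftLast_aesm {n : ℕ} {ψ : Torus n → ℂ}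
    (hψ : AEStronglyMeasurable ψ (volume : Measure (Torus n))) :
    AEStronglyMeasurable (liftLast ψ) (volume : Measure (Torus (n+1))) :=
  hψ.comp_quasiMeasurePreserving measurePreserving_init.quasiMeasurePreserving

lemma ae_liftLast {n : ℕ} {p : ℂ → Prop} {ψ : Torus n → ℂ}
    (h : ∀ᵐ y ∂(volume : Measure (Torus n)), p (ψ y)) :
    ∀ᵐ x ∂(volume : Measure (Torus (n+1))), p (liftLast ψ x) :=
  measurePreserving_init.quasiMeasurePreserving.ae h

lemma liftLast_memℒp {n : ℕ} {ψ : Torus n → ℂ} {C : ℝ}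
    (hψ : AEStronglyMeasurable ψ (volume : Measure (Torus n)))
    (hC : ∀ᵐ y ∂(volume : Measure (Torus n)), ‖ψ y‖ ≤ C) :
    MemLp (liftLast ψ) 2 (volume : Measure (Torus (n+1))) :=
  MemLp.of_bound (liftLast_aesm hψ) C (ae_liftLast (p := fun z => ‖z‖ ≤ C) hC)

/-- extract an a.e. bound from `MemLp ⊤` -/
lemma exists_bound_of_memLinf {n : ℕ} {φ : Torus n → ℂ}
    (h : MemLp φ ⊤ (volume : Measure (Torus n))) :
    ∃ C : ℝ, ∀ᵐ y ∂(volume : Measure (Torus n)), ‖φ y‖ ≤ C := by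
  refine ⟨(eLpNorm φ ⊤ volume).toReal, ?_⟩
  have hfin : eLpNorm φ ⊤ volume ≠ ⊤ := h.2.ne
  filter_upwards [ae_le_eLpNormEssSup (f := φ) (μ := volume)] with y hy
  have : (‖φ y‖₊ : ENNReal) ≤ eLpNorm φ ⊤ volume := by
    rwa [eLpNorm_exponent_top]
  calc ‖φ y‖ = ((‖φ y‖₊ : ENNReal)).toReal := by simp
  _ ≤ (eLpNorm φ ⊤ volume).toReal := ENNReal.toReal_mono hfin this


/-! ### multiplication pairing lemma -/

lemma coeff_mul_eq_zero {N : ℕ} {φ : Torus N → ℂ} (hφm : AEStronglyMeasurable φ (volume : Measure (Torus N)))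
    {C : ℝ} (hφb : ∀ᵐ x ∂(volume : Measure (Torus N)), ‖φ x‖ ≤ C)
    (S : Set (Fin N → ℤ)) (α : Fin N → ℤ)
    (hvan : ∀ β ∈ S, ∫ x, conj (charFunT α x) * (φ x * charFunT β x) = 0)
    (u : Lp2 N) (hu : u ∈ (Submodule.span ℂ (charLp '' S)).topologicalClosure) :
    ∫ x, conj (charFunT α x) * (φ x * (u : Torus N → ℂ) x) = 0 := by
  have hm : MemLp (fun x => charFunT α x * conj (φ x)) 2 (volume : Measure (Torus N)) := by
    refine MemLp.of_bound ((charFun_continuous α).aestronglyMeasurable.mul (Complex.continuous_conj.comp_aestronglyMeasurable hφm)) C ?_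
    filter_upwards [hφb] with x hx
    rw [norm_mul, charFun_norm, one_mul, RCLike.norm_conj]
    exact hx
  set m := hm.toLp _ with hmdef
  have key : ∀ v : Lp2 N, inner (𝕜 := ℂ) m v
      = ∫ x, conj (charFunT α x) * (φ x * (v : Torus N → ℂ) x) := by
    intro v
    rw [MeasureTheory.L2.inner_def]
    refine integral_congr_ae ?_
    filter_upwards [hm.coeFn_toLp] with x hx
    rw [RCLike.inner_apply, show ((m : Lp2 N) : Torus N → ℂ) x = charFunT α x * conj (φ x) from hx,
      map_mul, Complex.conj_conj]
    ring
  have hker : (Submodule.span ℂ (charLp '' S)).topologicalClosure ≤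
      LinearMap.ker ((innerSL ℂ m) : Lp2 N →ₗ[ℂ] ℂ) := by
    refine closure_span_le_ker _ _ ?_
    rintro _ ⟨β, hβ, rfl⟩
    show inner (𝕜 := ℂ) m (charLp β) = 0
    rw [key]
    rw [← hvan β hβ]
    refine integral_congr_ae ?_
    filter_upwards [(charFun_memℒp β).coeFn_toLp] with x hx
    rw [show ((charLp β : Lp2 N) : Torus N → ℂ) x = charFunT β x from hx]
  have : inner (𝕜 := ℂ) m u = 0 := hker hu
  rw [key] at this
  exact this

/-! ### pieces of sequence-based subspaces have analytic coefficients -/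

lemma seqM_coeff_zero {n : ℕ} (u : ℕ → Torus n → ℂ) (hu : ∀ l, IsHinf (u l))
    {α : Fin (n+1) → ℤ} (hα : ∃ i, α i < 0) :
    ∀ v ∈ seqM u, coeff v α = 0 := by
  have hker : seqM u ≤ LinearMap.ker ((innerSL ℂ (charLp α)) : Lp2 (n+1) →ₗ[ℂ] ℂ) := by
    refine Submodule.topologicalClosure_minimal _ (Submodule.span_le.mpr ?_)
      (isClosed_eq (innerSL ℂ (charLp α)).continuous continuous_const)
    intro v hv
    obtain ⟨l, hvl⟩ := Set.mem_iUnion.mp hv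
    obtain ⟨F, hF, hveq⟩ := hvl
    have hFS : F ∈ (Submodule.span ℂ
        (charLp '' {β : Fin (n+1) → ℤ | (∀ i, 0 ≤ β i) ∧ β (Fin.last n) = 0})).topologicalClosure := by
      refine mem_closureSpan _ _ fun β hβ => ?_
      refine hF β ?_
      by_cases hlast : β (Fin.last n) = 0
      · left
        have hne : ¬ (∀ i, 0 ≤ β i) := fun hc => hβ ⟨hc, hlast⟩
        push_neg at hne
        obtain ⟨i, hi⟩ := hne
        exact ⟨i, by omega⟩
      · right; exact hlast
    obtain ⟨C, hC⟩ := exists_bound_of_memLinf (hu l).memLinf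
    have hφm : AEStronglyMeasurable
        (fun x : Torus (n+1) => charFunT (Pi.single (Fin.last n) (l:ℤ)) x * liftLast (u l) x)
        (volume : Measure (Torus (n+1))) :=
      (charFun_continuous _).aestronglyMeasurable.mul
        (liftLast_aesm (hu l).memLinf.aestronglyMeasurable)
    have hφb : ∀ᵐ x ∂(volume : Measure (Torus (n+1))),
        ‖charFunT (Pi.single (Fin.last n) (l:ℤ)) x * liftLast (u l) x‖ ≤ C := by
      filter_upwards [ae_liftLast (p := fun z => ‖z‖ ≤ C) hC] with x hx
      rw [norm_mul, charFun_norm, one_mul]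
      exact hx
    have hvan : ∀ β ∈ {β : Fin (n+1) → ℤ | (∀ i, 0 ≤ β i) ∧ β (Fin.last n) = 0},
        ∫ x, conj (charFunT α x) *
          ((charFunT (Pi.single (Fin.last n) (l:ℤ)) x * liftLast (u l) x) * charFunT β x) = 0 := by
      rintro β ⟨hβ1, hβ2⟩
      have hpt : ∀ x : Torus (n+1), conj (charFunT α x) *
          ((charFunT (Pi.single (Fin.last n) (l:ℤ)) x * liftLast (u l) x) * charFunT β x)
          = charFunT (-α + (Pi.single (Fin.last n) (l:ℤ) + β)) x * liftLast (u l) x := by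
        intro x
        rw [charFun_conj]
        have : charFunT (-α) x * ((charFunT (Pi.single (Fin.last n) (l:ℤ)) x * liftLast (u l) x)
            * charFunT β x) = (charFunT (-α) x * (charFunT (Pi.single (Fin.last n) (l:ℤ)) x
            * charFunT β x)) * liftLast (u l) x := by ring
        rw [this, charFun_mul (Pi.single (Fin.last n) (l:ℤ)) β, charFun_mul]
      simp_rw [hpt]
      rw [integral_charFun_mul_liftLast]
      set γ := -α + (Pi.single (Fin.last n) (l:ℤ) + β) with hγ
      by_cases hlast : γ (Fin.last n) = 0
      · rw [if_pos hlast, one_mul]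
        obtain ⟨i, hi⟩ := hα
        have hγlast : γ (Fin.last n) = -α (Fin.last n) + ((l:ℤ) + β (Fin.last n)) := by
          simp [hγ, Pi.single_eq_same]
        have hlast' : α (Fin.last n) = (l:ℤ) := by
          rw [hγlast] at hlast
          omega
        have hine : i ≠ Fin.last n := by
          intro hc
          rw [hc, hlast'] at hi
          omega
        obtain ⟨j, rfl⟩ := Fin.exists_castSucc_eq.mpr hine
        have hneg : (-(Fin.init γ)) j < 0 := by
          have h1 : (Pi.single (Fin.last n) (l:ℤ) : Fin (n+1) → ℤ) (Fin.castSucc j) = 0 := by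
            rw [Pi.single_eq_of_ne (Fin.castSucc_lt_last j).ne]
          have h2 : Fin.init γ j = γ (Fin.castSucc j) := rfl
          have hβj : 0 ≤ β (Fin.castSucc j) := hβ1 _
          rw [Pi.neg_apply, h2]
          simp only [hγ, Pi.add_apply, Pi.neg_apply, h1]
          omega
        have hzero := (hu l).analytic (-(Fin.init γ)) ⟨j, hneg⟩
        rw [← hzero]
        refine integral_congr_ae (Filter.Eventually.of_forall fun y => ?_)
        show charFunT (Fin.init γ) y * u l y = conj (charFunT (-(Fin.init γ)) y) * u l y
        rw [charFun_conj, neg_neg]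
      · rw [if_neg hlast, zero_mul]
    have h0 := coeff_mul_eq_zero hφm hφb _ α hvan F hFS
    show inner (𝕜 := ℂ) (charLp α) v = 0
    rw [show (inner (𝕜 := ℂ) (charLp α) v : ℂ) = coeff v α from rfl, coeff_eq_integral]
    rw [integral_congr_ae (g := fun x => conj (charFunT α x) *
      ((charFunT (Pi.single (Fin.last n) (l:ℤ)) x * liftLast (u l) x) * (F : Torus (n+1) → ℂ) x))
      (by filter_upwards [hveq] with x hx; rw [hx])]
    exact h0
  intro v hv
  exact hker hv

/-! ### f₀ lifted lies in the sequence subspace -/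

lemma liftLast_mem_seqM {n : ℕ} (u : ℕ → Torus n → ℂ) {C : ℝ}
    (hm : AEStronglyMeasurable (u 0) (volume : Measure (Torus n)))
    (hb : ∀ᵐ y ∂(volume : Measure (Torus n)), ‖u 0 y‖ ≤ C) :
    ((liftLast_memℒp hm hb).toLp (liftLast (u 0))) ∈ seqM u := by
  apply Submodule.le_topologicalClosure
  apply Submodule.subset_span
  refine Set.mem_iUnion.mpr ⟨0, ?_⟩
  have honem : MemLp (fun _ : Torus (n+1) => (1:ℂ)) 2 (volume : Measure (Torus (n+1))) :=
    memLp_const 1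
  refine ⟨honem.toLp _, ?_, ?_⟩
  · intro β hβ
    rw [coeff_toLp]
    have hpt : ∀ x : Torus (n+1), conj (charFunT β x) * (1:ℂ) = charFunT (-β) x := by
      intro x; rw [mul_one, charFun_conj]
    simp_rw [hpt]
    rw [integral_charFun (-β)]
    have hβne : β ≠ 0 := by
      rcases hβ with ⟨i, hi⟩ | hne
      · intro hc; rw [hc] at hi; exact absurd hi (by simp)
      · intro hc; rw [hc] at hne; exact hne rfl
    rw [if_neg (fun hc => hβne (by funext i; have := congrFun hc i; simpa using this))]
  · filter_upwards [(liftLast_memℒp hm hb).coeFn_toLp, honem.coeFn_toLp] with x h1 h2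
    rw [h1, h2]
    have : charFunT (Pi.single (Fin.last n) ((0:ℕ):ℤ)) x = 1 := by
      rw [show (Pi.single (Fin.last n) ((0:ℕ):ℤ)) = (0 : Fin (n+1) → ℤ) by
        funext i
        rcases eq_or_ne i (Fin.last n) with hh | hh
        · simp [hh]
        · simp [Pi.single_eq_of_ne hh]]
      exact charFun_zero_eq x
    rw [this, one_mul, mul_one]


end S16

open S16

/-- if `M₁, M₂` are sequence-based invariant subspaces and `h` is a unimodular
function on `Tⁿ` with `M₂ = h M₁`, then `h` is independent of the variable `z_n`. -/
theorem stmt_16 {n : ℕ} (hn : 0 < n) (f g : ℕ → Torus n → ℂ)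
    (hf : SeqCond f) (hg : SeqCond g) (h : Torus (n+1) → ℂ)
    (hmeas : AEStronglyMeasurable h (volume : Measure (Torus (n+1))))
    (huni : ∀ᵐ x ∂(volume : Measure (Torus (n+1))), ‖h x‖ = 1)
    (heq : (seqM g : Set (Lp2 (n+1))) = mulSet h (seqM f : Set (Lp2 (n+1)))) :
    ∃ h₀ : Torus n → ℂ, h =ᵐ[(volume : Measure (Torus (n+1)))] liftLast h₀ := by
  classical
  have hfinf : ∀ l, IsHinf (f l) := fun l => (hf.1 l).1
  have hginf : ∀ l, IsHinf (g l) := fun l => (hg.1 l).1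
  obtain ⟨Cf, hCf⟩ := exists_bound_of_memLinf (hfinf 0).memLinf
  obtain ⟨Cg, hCg⟩ := exists_bound_of_memLinf (hginf 0).memLinf
  obtain ⟨cf, hcfpos, hcf⟩ := (hf.1 0).2
  obtain ⟨cg, hcgpos, hcg⟩ := (hg.1 0).2
  have hf0m := (hfinf 0).memLinf.aestronglyMeasurable
  have hg0m := (hginf 0).memLinf.aestronglyMeasurable
  have hH : MemLp h 2 (volume : Measure (Torus (n+1))) :=
    MemLp.of_bound hmeas 1 (by filter_upwards [huni] with x hx; rw [hx])
  -- V = h·f₀ ∈ seqM g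
  have hVml : MemLp (fun x => h x * liftLast (f 0) x) 2 (volume : Measure (Torus (n+1))) := by
    refine MemLp.of_bound (hmeas.mul (liftLast_aesm hf0m)) Cf ?_
    filter_upwards [huni, ae_liftLast (p := fun z => ‖z‖ ≤ Cf) hCf] with x h1 h2
    rw [norm_mul, h1, one_mul]; exact h2
  set V := hVml.toLp _ with hVdef
  have hVmem : V ∈ seqM g := by
    rw [← SetLike.mem_coe, heq]
    refine ⟨_, SetLike.mem_coe.mpr (liftLast_mem_seqM f hf0m hCf), ?_⟩
    filter_upwards [hVml.coeFn_toLp, (liftLast_memℒp hf0m hCf).coeFn_toLp] with x h1 h2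
    rw [h1, h2]
  -- W with g₀ = h·W
  have hg0c : ((liftLast_memℒp hg0m hCg).toLp (liftLast (g 0))) ∈
      mulSet h (seqM f : Set (Lp2 (n+1))) := by
    rw [← heq]; exact SetLike.mem_coe.mpr (liftLast_mem_seqM g hg0m hCg)
  obtain ⟨W, hWmem, hWeq⟩ := hg0c
  -- pointwise identities
  have hone : ∀ᵐ x ∂(volume : Measure (Torus (n+1))), conj (h x) * h x = 1 := by
    filter_upwards [huni] with x hx
    rw [mul_comm, Complex.mul_conj, Complex.normSq_eq_norm_sq, hx]
    norm_num
  have key1 : h =ᵐ[(volume : Measure (Torus (n+1)))]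
      fun x => liftLast (fun y => (f 0 y)⁻¹) x * (V : Torus (n+1) → ℂ) x := by
    filter_upwards [hVml.coeFn_toLp, ae_liftLast (p := fun z => cf ≤ ‖z‖) hcf] with x h1 h2
    have hne : liftLast (f 0) x ≠ 0 := by
      intro hc; rw [hc, norm_zero] at h2; linarith
    rw [h1]
    show h x = (liftLast (f 0) x)⁻¹ * (h x * liftLast (f 0) x)
    field_simp
  have key2 : (fun x => conj (h x)) =ᵐ[(volume : Measure (Torus (n+1)))]
      fun x => liftLast (fun y => (g 0 y)⁻¹) x * (W : Torus (n+1) → ℂ) x := by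
    filter_upwards [hWeq, (liftLast_memℒp hg0m hCg).coeFn_toLp, hone,
      ae_liftLast (p := fun z => cg ≤ ‖z‖) hcg] with x h1 h2 h3 h4
    have hWx : (W : Torus (n+1) → ℂ) x = conj (h x) * liftLast (g 0) x := by
      calc (W : Torus (n+1) → ℂ) x
          = conj (h x) * h x * (W : Torus (n+1) → ℂ) x := by rw [h3, one_mul]
        _ = conj (h x) * liftLast (g 0) x := by rw [mul_assoc, ← h1, h2]
    have hne : liftLast (g 0) x ≠ 0 := by
      intro hc; rw [hc, norm_zero] at h4; linarith
    show conj (h x) = (liftLast (g 0) x)⁻¹ * (W : Torus (n+1) → ℂ) x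
    rw [hWx]
    field_simp
  -- negative last-coefficients of h vanish
  have claim_neg : ∀ α : Fin (n+1) → ℤ, α (Fin.last n) < 0 → coeff (hH.toLp h) α = 0 := by
    intro α hαl
    have hφm : AEStronglyMeasurable (liftLast (fun y => (f 0 y)⁻¹))
        (volume : Measure (Torus (n+1))) := liftLast_aesm hf0m.aemeasurable.inv.aestronglyMeasurable
    have hφb : ∀ᵐ x ∂(volume : Measure (Torus (n+1))),
        ‖liftLast (fun y => (f 0 y)⁻¹) x‖ ≤ cf⁻¹ := by
      refine ae_liftLast (p := fun z => ‖z‖ ≤ cf⁻¹) ?_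
      filter_upwards [hcf] with y hy
      rw [norm_inv]
      exact inv_anti₀ hcfpos hy
    have hVcl : V ∈ (Submodule.span ℂ
        (charLp '' {β : Fin (n+1) → ℤ | ∀ i, 0 ≤ β i})).topologicalClosure := by
      refine mem_closureSpan _ _ fun β hβ => ?_
      have hbad : ∃ i, β i < 0 := by
        by_contra hc; push_neg at hc; exact hβ (fun i => hc i)
      exact seqM_coeff_zero g hginf hbad V hVmem
    have hvan : ∀ β ∈ {β : Fin (n+1) → ℤ | ∀ i, 0 ≤ β i},
        ∫ x, conj (charFunT α x) * (liftLast (fun y => (f 0 y)⁻¹) x * charFunT β x) = 0 := by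
      intro β hβ
      have hpt : ∀ x : Torus (n+1),
          conj (charFunT α x) * (liftLast (fun y => (f 0 y)⁻¹) x * charFunT β x)
          = charFunT (-α + β) x * liftLast (fun y => (f 0 y)⁻¹) x := by
        intro x
        rw [charFun_conj]
        have : charFunT (-α) x * (liftLast (fun y => (f 0 y)⁻¹) x * charFunT β x)
            = (charFunT (-α) x * charFunT β x) * liftLast (fun y => (f 0 y)⁻¹) x := by ring
        rw [this, charFun_mul]
      simp_rw [hpt]
      rw [integral_charFun_mul_liftLast]
      have hne : (-α + β) (Fin.last n) ≠ 0 := by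
        have := hβ (Fin.last n)
        simp only [Pi.add_apply, Pi.neg_apply]
        omega
      rw [if_neg hne, zero_mul]
    have h0 := coeff_mul_eq_zero hφm hφb _ α hvan V hVcl
    rw [coeff_toLp]
    rw [integral_congr_ae (g := fun x => conj (charFunT α x) *
      (liftLast (fun y => (f 0 y)⁻¹) x * (V : Torus (n+1) → ℂ) x))
      (by filter_upwards [key1] with x hx; rw [hx])]
    exact h0
  -- positive last-coefficients of h vanish
  have claim_pos : ∀ α : Fin (n+1) → ℤ, 0 < α (Fin.last n) → coeff (hH.toLp h) α = 0 := by
    intro α hαl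
    have hφm : AEStronglyMeasurable (liftLast (fun y => (g 0 y)⁻¹))
        (volume : Measure (Torus (n+1))) := liftLast_aesm hg0m.aemeasurable.inv.aestronglyMeasurable
    have hφb : ∀ᵐ x ∂(volume : Measure (Torus (n+1))),
        ‖liftLast (fun y => (g 0 y)⁻¹) x‖ ≤ cg⁻¹ := by
      refine ae_liftLast (p := fun z => ‖z‖ ≤ cg⁻¹) ?_
      filter_upwards [hcg] with y hy
      rw [norm_inv]
      exact inv_anti₀ hcgpos hy
    have hWcl : W ∈ (Submodule.span ℂ
        (charLp '' {β : Fin (n+1) → ℤ | ∀ i, 0 ≤ β i})).topologicalClosure := by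
      refine mem_closureSpan _ _ fun β hβ => ?_
      have hbad : ∃ i, β i < 0 := by
        by_contra hc; push_neg at hc; exact hβ (fun i => hc i)
      exact seqM_coeff_zero f hfinf hbad W (SetLike.mem_coe.mp hWmem)
    have hvan : ∀ β ∈ {β : Fin (n+1) → ℤ | ∀ i, 0 ≤ β i},
        ∫ x, conj (charFunT (-α) x) * (liftLast (fun y => (g 0 y)⁻¹) x * charFunT β x) = 0 := by
      intro β hβ
      have hpt : ∀ x : Torus (n+1),
          conj (charFunT (-α) x) * (liftLast (fun y => (g 0 y)⁻¹) x * charFunT β x)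
          = charFunT (α + β) x * liftLast (fun y => (g 0 y)⁻¹) x := by
        intro x
        rw [charFun_conj, neg_neg]
        have : charFunT α x * (liftLast (fun y => (g 0 y)⁻¹) x * charFunT β x)
            = (charFunT α x * charFunT β x) * liftLast (fun y => (g 0 y)⁻¹) x := by ring
        rw [this, charFun_mul]
      simp_rw [hpt]
      rw [integral_charFun_mul_liftLast]
      have hne : (α + β) (Fin.last n) ≠ 0 := by
        have := hβ (Fin.last n)
        simp only [Pi.add_apply]
        omega
      rw [if_neg hne, zero_mul]
    have h0 := coeff_mul_eq_zero hφm hφb _ (-α) hvan W hWcl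
    rw [coeff_toLp]
    have hconj : ∫ x, conj (charFunT α x) * h x
        = conj (∫ x, conj (charFunT (-α) x) *
          (liftLast (fun y => (g 0 y)⁻¹) x * (W : Torus (n+1) → ℂ) x)) := by
      rw [← integral_conj]
      refine integral_congr_ae ?_
      filter_upwards [key2] with x hx
      have hx' : liftLast (fun y => (g 0 y)⁻¹) x * (W : Torus (n+1) → ℂ) x = conj (h x) :=
        hx.symm
      rw [map_mul, hx', Complex.conj_conj, Complex.conj_conj, charFun_conj]
    rw [hconj, h0, map_zero]
  -- the averaged function h₀
  set h₀ : Torus n → ℂ := fun y => ∫ t : AddCircle (1:ℝ), h (Fin.snoc y t) with hh₀def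
  have hsnocm : AEStronglyMeasurable (fun q : Torus n × AddCircle (1:ℝ) => h (Fin.snoc q.1 q.2))
      ((volume : Measure (Torus n)).prod (volume : Measure (AddCircle (1:ℝ)))) :=
    hmeas.comp_quasiMeasurePreserving (mpSnoc n).quasiMeasurePreserving
  have hh₀m : AEStronglyMeasurable h₀ (volume : Measure (Torus n)) :=
    hsnocm.integral_prod_right'
  have huniq : ∀ᵐ q ∂((volume : Measure (Torus n)).prod (volume : Measure (AddCircle (1:ℝ)))),
      ‖h (Fin.snoc q.1 q.2)‖ = 1 := (mpSnoc n).quasiMeasurePreserving.ae huni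
  have hae2 := Measure.ae_ae_of_ae_prod huniq
  have hh₀b : ∀ᵐ y ∂(volume : Measure (Torus n)), ‖h₀ y‖ ≤ 1 := by
    filter_upwards [hae2] with y hy
    calc ‖h₀ y‖ ≤ 1 * ((volume : Measure (AddCircle (1:ℝ))) Set.univ).toReal :=
        norm_integral_le_of_norm_le_const (by filter_upwards [hy] with t ht; rw [ht])
      _ = 1 := by simp
  set H' := (liftLast_memℒp hh₀m hh₀b).toLp (liftLast h₀) with hH'def
  -- coefficients of h with vanishing last index
  have claim0 : ∀ α : Fin (n+1) → ℤ, α (Fin.last n) = 0 →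
      coeff (hH.toLp h) α = ∫ y, charFunT (Fin.init (-α)) y * h₀ y := by
    intro α hαl
    rw [coeff_toLp]
    rw [integral_torus_succ (fun x => conj (charFunT α x) * h x)]
    have hpt : ∀ p : AddCircle (1:ℝ) × Torus n,
        conj (charFunT α (Fin.snoc p.2 p.1)) * h (Fin.snoc p.2 p.1)
        = charFunT (Fin.init (-α)) p.2 * h (Fin.snoc p.2 p.1) := by
      intro p
      rw [charFun_conj, charFun_snoc,
        show (-α) (Fin.last n) = 0 by simp [hαl], fourier_zero, one_mul]
    simp_rw [hpt]
    have hsm2 : AEStronglyMeasurable (fun p : AddCircle (1:ℝ) × Torus n => h (Fin.snoc p.2 p.1))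
        ((volume : Measure (AddCircle (1:ℝ))).prod (volume : Measure (Torus n))) :=
      hmeas.comp_quasiMeasurePreserving
        ((mpSnoc n).comp Measure.measurePreserving_swap).quasiMeasurePreserving
    have hu2 : ∀ᵐ p ∂((volume : Measure (AddCircle (1:ℝ))).prod (volume : Measure (Torus n))),
        ‖h (Fin.snoc p.2 p.1)‖ = 1 :=
      ((mpSnoc n).comp Measure.measurePreserving_swap).quasiMeasurePreserving.ae huni
    have hint : Integrable (fun p : AddCircle (1:ℝ) × Torus n =>
        charFunT (Fin.init (-α)) p.2 * h (Fin.snoc p.2 p.1))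
        ((volume : Measure (AddCircle (1:ℝ))).prod (volume : Measure (Torus n))) := by
      refine Integrable.mono' (integrable_const 1)
        (((charFun_continuous _).comp continuous_snd).aestronglyMeasurable.mul hsm2) ?_
      filter_upwards [hu2] with p hp
      rw [norm_mul, charFun_norm, one_mul, hp]
    rw [show (volume : Measure (AddCircle (1:ℝ) × Torus n))
      = (volume : Measure (AddCircle (1:ℝ))).prod (volume : Measure (Torus n)) from rfl]
    rw [integral_prod_symm _ hint]
    refine integral_congr_ae (Filter.Eventually.of_forall fun y => ?_)
    show (∫ t : AddCircle (1:ℝ), charFunT (Fin.init (-α)) y * h (Fin.snoc y t))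
      = charFunT (Fin.init (-α)) y * h₀ y
    rw [MeasureTheory.integral_const_mul]
  -- coefficients of liftLast h₀
  have claimH' : ∀ α : Fin (n+1) → ℤ,
      coeff H' α = (if α (Fin.last n) = 0 then (1:ℂ) else 0)
        * ∫ y, charFunT (Fin.init (-α)) y * h₀ y := by
    intro α
    rw [hH'def, coeff_toLp]
    have hpt : ∀ x, conj (charFunT α x) * liftLast h₀ x = charFunT (-α) x * liftLast h₀ x :=
      fun x => by rw [charFun_conj]
    simp_rw [hpt]
    rw [integral_charFun_mul_liftLast]
    by_cases hc : α (Fin.last n) = 0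
    · rw [if_pos hc, if_pos (show (-α) (Fin.last n) = 0 by simp [hc])]
    · rw [if_neg hc, if_neg (show (-α) (Fin.last n) ≠ 0 by simp [hc])]
  -- conclude
  have hfinal : hH.toLp h = H' := by
    have hdiff : ∀ α, coeff (hH.toLp h - H') α = 0 := by
      intro α
      have hsub : coeff (hH.toLp h - H') α = coeff (hH.toLp h) α - coeff H' α := by
        rw [coeff, coeff, coeff, inner_sub_right]
      rw [hsub]
      rcases lt_trichotomy (α (Fin.last n)) 0 with hlt | hzero | hgt
      · rw [claim_neg α hlt, claimH' α, if_neg (by omega), zero_mul, sub_zero]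
      · rw [claim0 α hzero, claimH' α, if_pos hzero, one_mul, sub_self]
      · rw [claim_pos α hgt, claimH' α, if_neg (by omega), zero_mul, sub_zero]
    have hz := eq_zero_of_coeff_zero _ hdiff
    exact sub_eq_zero.mp hz
  exact ⟨h₀, (MemLp.toLp_eq_toLp_iff hH (liftLast_memℒp hh₀m hh₀b)).mp hfinal⟩


end
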